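/- Let n ≥ 1, let λ_1, …, λ_n > 0, let ν be a probability measure on [0,∞)^n (the law of a random vector T = (T_1,…,T_n)), and let the pair (T, D) with D = (D_1,…,D_n) taking values in ℕ^n have joint law ν ⊗ κ, where for each t = (t_1,…,t_n) the kernel κ(t) is the product over p = 1,…,n of Poisson distributions on ℕ with means λ_p t_p. Then for every ω with 0 ≤ ω ≤ min_p λ_p: E[ ∏_{p=1}^n (1 − ω/λ_p)^{D_p} ] = E[ exp( −ω ∑_{p=1}^n T_p ) ]. (Here 0^0 is taken to be 1.) -/

import Mathlib

open MeasureTheory ProbabilityTheory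

/-- The Poisson probability mass function with (real) mean `r`: `e^{-r} r^k / k!`. -/
noncomputable def poissonPdf (r : ℝ) (k : ℕ) : ℝ :=
  Real.exp (-r) * r ^ k / (Nat.factorial k)

lemma tsum_pi_prod : ∀ (n : ℕ) (g : Fin n → ℕ → ENNReal),
    ∑' f : Fin n → ℕ, ∏ p, g p (f p) = ∏ p, ∑' k, g p k := by
  intro n
  induction n with
  | zero =>
    intro g
    simp only [Finset.univ_eq_empty, Finset.prod_empty]
    exact tsum_eq_single (fun (i : Fin 0) => 0) (fun b hb => absurd (Subsingleton.elim b _) hb)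
  | succ m ih =>
    intro g
    rw [← (Fin.consEquiv (fun _ : Fin (m+1) => ℕ)).tsum_eq]
    simp only [Fin.consEquiv_apply]
    rw [ENNReal.tsum_prod']
    have : ∀ (k : ℕ) (f : Fin m → ℕ),
        (∏ p, g p ((Fin.cons k f : ∀ _ : Fin (m+1), ℕ) p)) = g 0 k * ∏ p : Fin m, g p.succ (f p) := by
      intro k f
      rw [Fin.prod_univ_succ]
      simp
    simp_rw [this, ENNReal.tsum_mul_left, ENNReal.tsum_mul_right (f := fun k => g 0 k)]
    rw [ih (fun p k => g p.succ k), Fin.prod_univ_succ]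

lemma tsum_geom_poisson {z r : ℝ} (hz : 0 ≤ z) (hr : 0 ≤ r) :
    ∑' k : ℕ, ENNReal.ofReal (z ^ k * poissonPdf r k)
      = ENNReal.ofReal (Real.exp ((z - 1) * r)) := by
  have hterm : ∀ k, z ^ k * poissonPdf r k = Real.exp (-r) * ((z * r) ^ k / (Nat.factorial k)) := by
    intro k
    simp [poissonPdf, mul_pow]
    ring
  have hsum : HasSum (fun k : ℕ => z ^ k * poissonPdf r k) (Real.exp ((z - 1) * r)) := by
    simp_rw [hterm]
    have h1 : HasSum (fun k : ℕ => (z * r) ^ k / (Nat.factorial k)) (Real.exp (z * r)) := by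
      rw [Real.exp_eq_exp_ℝ]
      exact NormedSpace.expSeries_div_hasSum_exp (z * r)
    have := h1.mul_left (Real.exp (-r))
    rwa [← Real.exp_add, show -r + z * r = (z - 1) * r by ring] at this
  have hnonneg : ∀ k : ℕ, 0 ≤ z ^ k * poissonPdf r k := by
    intro k
    apply mul_nonneg (pow_nonneg hz k)
    unfold poissonPdf
    positivity

  rw [← ENNReal.ofReal_tsum_of_nonneg hnonneg hsum.summable, hsum.tsum_eq]

lemma poissonPdf_nonneg {r : ℝ} (hr : 0 ≤ r) (k : ℕ) : 0 ≤ poissonPdf r k := by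
  unfold poissonPdf; positivity

lemma measurable_poissonPdf (k : ℕ) : Measurable (fun r => poissonPdf r k) := by
  unfold poissonPdf
  fun_prop

/-- The substitution `z_p = 1 - ω/λ_p` in the mixed-Poisson joint PGF identity
(the key step of Theorem 4.1 and Theorem 5.2 of the paper): if the pair `(T, D)` has
law `ν ⊗ κ` with `κ` the product-Poisson kernel with means `λ_p t_p`, then for every
`ω` with `0 ≤ ω ≤ min_p λ_p`,
`E[∏ p, (1 - ω/λ_p) ^ D_p] = E[exp (-ω ∑ p, T_p)]`. -/
theorem stmt4 {Ω : Type*} [MeasurableSpace Ω] (μ : Measure Ω) [IsProbabilityMeasure μ]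
    (n : ℕ) (hn : 0 < n) (lam : Fin n → ℝ) (hlam : ∀ p, 0 < lam p)
    (ν : Measure (Fin n → ℝ)) [IsProbabilityMeasure ν]
    (hνsupp : ∀ᵐ t ∂ν, ∀ p, 0 ≤ t p)
    (T : Ω → Fin n → ℝ) (D : Ω → Fin n → ℕ) (hT : Measurable T) (hD : Measurable D)
    (hTlaw : Measure.map T μ = ν)
    (hjoint : ∀ A : Set (Fin n → ℝ), MeasurableSet A → ∀ f : Fin n → ℕ,
      μ (T ⁻¹' A ∩ {x | D x = f})
        = ∫⁻ t in A, ENNReal.ofReal (∏ p, poissonPdf (lam p * t p) (f p)) ∂ν)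
    (ω : ℝ) (hω0 : 0 ≤ ω) (hωlam : ∀ p, ω ≤ lam p) :
    ∫ x, ∏ p, (1 - ω / lam p) ^ (D x p) ∂μ
      = ∫ x, Real.exp (-ω * ∑ p, T x p) ∂μ := by
  set z : Fin n → ℝ := fun p => 1 - ω / lam p with hz
  have hz0 : ∀ p, 0 ≤ z p := fun p => by
    have : ω / lam p ≤ 1 := (div_le_one (hlam p)).mpr (hωlam p)
    simpa [hz] using this
  -- rewrite LHS integral
  have hgmeas : Measurable (fun f : Fin n → ℕ => ∏ p, z p ^ f p) :=
    measurable_of_countable _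
  have hLmeas : Measurable (fun x => ∏ p, z p ^ (D x p)) := hgmeas.comp hD
  have hRmeas : Measurable (fun t : Fin n → ℝ => Real.exp (-ω * ∑ p, t p)) := by fun_prop
  have hL : ∫ x, ∏ p, z p ^ (D x p) ∂μ
      = (∫⁻ x, ENNReal.ofReal (∏ p, z p ^ (D x p)) ∂μ).toReal := by
    apply integral_eq_lintegral_of_nonneg_ae
    · filter_upwards with x
      exact Finset.prod_nonneg fun p _ => pow_nonneg (hz0 p) _
    · exact hLmeas.aestronglyMeasurable
  have hR : ∫ x, Real.exp (-ω * ∑ p, T x p) ∂μ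
      = (∫⁻ x, ENNReal.ofReal (Real.exp (-ω * ∑ p, T x p)) ∂μ).toReal := by
    apply integral_eq_lintegral_of_nonneg_ae
    · filter_upwards with x using (Real.exp_pos _).le
    · exact (hRmeas.comp hT).aestronglyMeasurable
  rw [hL, hR]
  congr 1
  -- RHS lintegral as integral over ν
  have hRν : ∫⁻ x, ENNReal.ofReal (Real.exp (-ω * ∑ p, T x p)) ∂μ
      = ∫⁻ t, ENNReal.ofReal (Real.exp (-ω * ∑ p, t p)) ∂ν := by
    rw [← hTlaw, lintegral_map (by fun_prop) hT]
  -- LHS lintegral as sum over f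
  have hmapD : ∫⁻ x, ENNReal.ofReal (∏ p, z p ^ (D x p)) ∂μ
      = ∑' f : Fin n → ℕ, ENNReal.ofReal (∏ p, z p ^ f p) * μ {x | D x = f} := by
    rw [← lintegral_map (f := fun f : Fin n → ℕ => ENNReal.ofReal (∏ p, z p ^ f p))
      (measurable_of_countable _) hD, lintegral_countable']
    congr 1
    ext f
    rw [Measure.map_apply hD (measurableSet_singleton f)]
    rfl
  have hDf : ∀ f : Fin n → ℕ, μ {x | D x = f}
      = ∫⁻ t, ENNReal.ofReal (∏ p, poissonPdf (lam p * t p) (f p)) ∂ν := by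
    intro f
    have := hjoint Set.univ MeasurableSet.univ f
    simpa using this
  rw [hmapD, hRν]
  simp_rw [hDf]
  -- pull constants into integrals and swap sum and integral
  have hswap : ∑' f : Fin n → ℕ, ENNReal.ofReal (∏ p, z p ^ f p)
        * ∫⁻ t, ENNReal.ofReal (∏ p, poissonPdf (lam p * t p) (f p)) ∂ν
      = ∫⁻ t, ∑' f : Fin n → ℕ, ENNReal.ofReal (∏ p, z p ^ f p)
        * ENNReal.ofReal (∏ p, poissonPdf (lam p * t p) (f p)) ∂ν := by
    have hmeas : ∀ f : Fin n → ℕ, AEMeasurable (fun t : Fin n → ℝ =>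
        ENNReal.ofReal (∏ p, z p ^ f p)
          * ENNReal.ofReal (∏ p, poissonPdf (lam p * t p) (f p))) ν := by
      intro f
      apply AEMeasurable.const_mul
      apply Measurable.aemeasurable
      apply ENNReal.measurable_ofReal.comp
      apply Finset.measurable_prod
      intro p _
      exact (measurable_poissonPdf (f p)).comp (by fun_prop)
    rw [lintegral_tsum hmeas]
    simp_rw [lintegral_const_mul' _ _ ENNReal.ofReal_ne_top]
  rw [hswap]
  -- pointwise identity a.e.
  apply lintegral_congr_ae
  filter_upwards [hνsupp] with t ht
  have hstep : ∀ f : Fin n → ℕ,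
      ENNReal.ofReal (∏ p, z p ^ f p) * ENNReal.ofReal (∏ p, poissonPdf (lam p * t p) (f p))
      = ∏ p, ENNReal.ofReal (z p ^ f p * poissonPdf (lam p * t p) (f p)) := by
    intro f
    rw [← ENNReal.ofReal_mul (Finset.prod_nonneg fun p _ => pow_nonneg (hz0 p) _),
      ← Finset.prod_mul_distrib,
      ENNReal.ofReal_prod_of_nonneg]
    intro p _
    exact mul_nonneg (pow_nonneg (hz0 p) _)
      (poissonPdf_nonneg (mul_nonneg (hlam p).le (ht p)) _)
  simp_rw [hstep]
  rw [tsum_pi_prod n (fun p k => ENNReal.ofReal (z p ^ k * poissonPdf (lam p * t p) k))]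
  have hfac : ∀ p, ∑' k, ENNReal.ofReal (z p ^ k * poissonPdf (lam p * t p) k)
      = ENNReal.ofReal (Real.exp (-ω * t p)) := by
    intro p
    rw [tsum_geom_poisson (hz0 p) (mul_nonneg (hlam p).le (ht p))]
    congr 1
    have hlp : lam p ≠ 0 := (hlam p).ne'
    field_simp [hz]
    congr 1
    simp only [hz]
    have h2 : ω / lam p * lam p = ω := div_mul_cancel₀ _ hlp
    linear_combination (-(t p)) * h2
  simp_rw [hfac]
  rw [← ENNReal.ofReal_prod_of_nonneg (fun p _ => (Real.exp_pos _).le),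
    ← Real.exp_sum]
  congr 1
  rw [Finset.mul_sum]
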